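/- Assume (H0) and let β > f'(0) > 0, c ∈ ℝ. With k₁ and k₂ as defined, for every z with 0 ≤ z < min(μ(c), γ#(c)) the function χ(z) := 1 − g'(0)·∫_ℝ (k₁*k₂)(s)·e^{−zs} ds − (β − f'(0))·∫_ℝ k₁(s)·e^{−zs} ds satisfies χ(z) = −χ₀(z,c)/(β + cz − z²), where χ₀(z,c) := z² − cz − f'(0) + g'(0)·∫₀^∞∫_ℝ K(s,w)·e^{−z(cs+w)} dw ds. In particular χ(0) = (f'(0) − g'(0))/β, which is negative whenever f'(0) < g'(0). -/

import Mathlib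

open MeasureTheory Filter Set
open scoped ENNReal

noncomputable section

/-- positive root `μ(c)` of `z² - cz - β = 0`. -/
def muRoot (β c : ℝ) : ℝ := (c + Real.sqrt (c ^ 2 + 4 * β)) / 2

/-- negative root `ν(c)` of `z² - cz - β = 0`. -/
def nuRoot (β c : ℝ) : ℝ := (c - Real.sqrt (c ^ 2 + 4 * β)) / 2

/-- the Green's function kernel `k₁`. -/
def k1 (β c : ℝ) (s : ℝ) : ℝ :=
  if 0 ≤ s then Real.exp (nuRoot β c * s) / Real.sqrt (c ^ 2 + 4 * β)
  else Real.exp (muRoot β c * s) / Real.sqrt (c ^ 2 + 4 * β)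

/-- the kernel `k₂(r) = ∫₀^∞ K(s, r - cs) ds`. -/
def k2 (K : ℝ → ℝ → ℝ) (c : ℝ) (r : ℝ) : ℝ := ∫ s in Set.Ioi (0:ℝ), K s (r - c * s)

/-- convolution of two functions on `ℝ`. -/
def conv (a b : ℝ → ℝ) (t : ℝ) : ℝ := ∫ r : ℝ, a (t - r) * b r

/-- `χ(z) = 1 - g'(0) ∫ (k₁*k₂)(s)e^{-zs} ds - (β - f'(0)) ∫ k₁(s)e^{-zs} ds`. -/
def chiFun (K : ℝ → ℝ → ℝ) (β c fd0 gd0 : ℝ) (z : ℝ) : ℝ :=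
  1 - gd0 * (∫ s : ℝ, conv (k1 β c) (k2 K c) s * Real.exp (-z * s)) -
    (β - fd0) * ∫ s : ℝ, k1 β c s * Real.exp (-z * s)

/-- `χ₀(z,c) = z² - cz - f'(0) + g'(0) ∫₀^∞∫_ℝ K(s,w) e^{-z(cs+w)}`. -/
def chi0 (K : ℝ → ℝ → ℝ) (fd0 gd0 : ℝ) (z c : ℝ) : ℝ :=
  z ^ 2 - c * z - fd0 +
    gd0 * ∫ s in Set.Ioi (0:ℝ), ∫ w : ℝ, K s w * Real.exp (-z * (c * s + w))


lemma intExpIoi {b : ℝ} (hb : 0 < b) : ∫ x in Ioi (0:ℝ), Real.exp (-b * x) = 1 / b := by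
  have h := integral_comp_mul_left_Ioi (fun x => Real.exp (-x)) 0 hb
  simp only [mul_zero, integral_exp_neg_Ioi_zero, smul_eq_mul, mul_one] at h
  simp only [neg_mul]
  simpa [neg_mul, one_div] using h

lemma intExpIicInt {b : ℝ} (hb : 0 < b) :
    IntegrableOn (fun x : ℝ => Real.exp (b * x)) (Iic 0) := by
  have h1 : IntegrableOn (fun x : ℝ => Real.exp (-b * x)) (Ioi 0) :=
    exp_neg_integrableOn_Ioi 0 hb
  have h2 := (MeasurePreserving.integrableOn_comp_preimage
      (Measure.measurePreserving_neg (volume : Measure ℝ))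
      (Homeomorph.neg ℝ).measurableEmbedding).2 h1
  have h3 : IntegrableOn (fun x : ℝ => Real.exp (b * x)) (Iio 0) := by
    have heq : (fun x : ℝ => Real.exp (-b * x)) ∘ Neg.neg = fun x : ℝ => Real.exp (b * x) := by
      funext x; simp [Function.comp, mul_comm]
    have hpre : (Neg.neg ⁻¹' Ioi (0:ℝ)) = Iio 0 := by ext x; simp
    rw [heq, hpre] at h2; exact h2
  exact h3.congr_set_ae Iio_ae_eq_Iic.symm

lemma intExpIic {b : ℝ} (hb : 0 < b) : ∫ x in Iic (0:ℝ), Real.exp (b * x) = 1 / b := by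
  have h := integral_comp_neg_Iic (0:ℝ) (fun x => Real.exp (-b * x))
  simp only [mul_neg, neg_mul, neg_neg, neg_zero] at h
  rw [h]
  simpa [neg_mul] using intExpIoi hb

lemma mu_pos {β c : ℝ} (hβ : 0 < β) : 0 < muRoot β c := by
  have hsq : Real.sqrt (c ^ 2 + 4 * β) ^ 2 = c ^ 2 + 4 * β :=
    Real.sq_sqrt (by nlinarith)
  have hpos : 0 < Real.sqrt (c ^ 2 + 4 * β) := Real.sqrt_pos.mpr (by nlinarith)
  unfold muRoot
  nlinarith [hsq, hpos]

lemma nu_neg {β c : ℝ} (hβ : 0 < β) : nuRoot β c < 0 := by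
  have hsq : Real.sqrt (c ^ 2 + 4 * β) ^ 2 = c ^ 2 + 4 * β :=
    Real.sq_sqrt (by nlinarith)
  have hpos : 0 < Real.sqrt (c ^ 2 + 4 * β) := Real.sqrt_pos.mpr (by nlinarith)
  unfold nuRoot
  nlinarith [hsq, hpos]

lemma den_eq {β c z : ℝ} (hβ : 0 < β) :
    β + c * z - z ^ 2 = (z - nuRoot β c) * (muRoot β c - z) := by
  have hsq : Real.sqrt (c ^ 2 + 4 * β) ^ 2 = c ^ 2 + 4 * β :=
    Real.sq_sqrt (by nlinarith)
  unfold muRoot nuRoot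
  nlinarith [hsq]

lemma k1_laplace {β c z : ℝ} (hβ : 0 < β) (hz : 0 ≤ z) (hzμ : z < muRoot β c) :
    Integrable (fun s => k1 β c s * Real.exp (-z * s)) volume ∧
      ∫ s : ℝ, k1 β c s * Real.exp (-z * s) = 1 / (β + c * z - z ^ 2) := by
  set σ := Real.sqrt (c ^ 2 + 4 * β) with hσdef
  have hσpos : 0 < σ := Real.sqrt_pos.mpr (by nlinarith)
  have hzν : 0 < z - nuRoot β c := by linarith [nu_neg (c := c) hβ]
  have hzμ' : 0 < muRoot β c - z := by linarith
  -- eq on Ioi 0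
  have heq1 : EqOn (fun s => σ⁻¹ * Real.exp (-(z - nuRoot β c) * s))
      (fun s => k1 β c s * Real.exp (-z * s)) (Ioi 0) := by
    intro s hs
    have hs0 : (0:ℝ) ≤ s := le_of_lt hs
    simp only [k1, if_pos hs0]
    rw [show (-(z - nuRoot β c) * s) = nuRoot β c * s + -z * s from by ring, Real.exp_add]
    ring
  have heq2 : EqOn (fun s => σ⁻¹ * Real.exp ((muRoot β c - z) * s))
      (fun s => k1 β c s * Real.exp (-z * s)) (Iic 0) := by
    intro s hs
    rcases lt_or_eq_of_le (mem_Iic.mp hs) with h | h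
    · simp only [k1, if_neg (not_le.mpr h)]
      rw [show ((muRoot β c - z) * s) = muRoot β c * s + -z * s from by ring, Real.exp_add]
      ring
    · subst h; simp [k1, one_div, hσdef]
  have hI1 : IntegrableOn (fun s => k1 β c s * Real.exp (-z * s)) (Ioi 0) := by
    refine IntegrableOn.congr_fun ?_ heq1 measurableSet_Ioi
    exact (exp_neg_integrableOn_Ioi 0 hzν).const_mul _
  have hI2 : IntegrableOn (fun s => k1 β c s * Real.exp (-z * s)) (Iic 0) := by
    refine IntegrableOn.congr_fun ?_ heq2 measurableSet_Iic
    exact (intExpIicInt hzμ').const_mul _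
  have hint : Integrable (fun s => k1 β c s * Real.exp (-z * s)) volume := by
    rw [← integrableOn_univ, ← Iic_union_Ioi (a := (0:ℝ))]
    exact hI2.union hI1
  refine ⟨hint, ?_⟩
  rw [← intervalIntegral.integral_Iic_add_Ioi hI2 hI1]
  rw [← setIntegral_congr_fun measurableSet_Ioi heq1,
      ← setIntegral_congr_fun measurableSet_Iic heq2]
  rw [integral_const_mul, integral_const_mul, intExpIoi hzν, intExpIic hzμ']
  rw [den_eq (c := c) (z := z) hβ]
  have hσeq : muRoot β c - nuRoot β c = σ := by unfold muRoot nuRoot; ring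
  field_simp
  linear_combination hσeq

lemma k2_laplace (K : ℝ → ℝ → ℝ) (c z : ℝ)
    (hKI : IntegrableOn (fun x : ℝ × ℝ => K x.1 x.2 * Real.exp (-z * (c * x.1 + x.2)))
      (Set.Ioi 0 ×ˢ Set.univ)) :
    Integrable (fun r => k2 K c r * Real.exp (-z * r)) volume ∧
      ∫ r : ℝ, k2 K c r * Real.exp (-z * r)
        = ∫ s in Ioi (0:ℝ), ∫ w : ℝ, K s w * Real.exp (-z * (c * s + w)) := by
  have hF : Integrable (fun p : ℝ × ℝ => K p.1 p.2 * Real.exp (-z * (c * p.1 + p.2)))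
      ((volume.restrict (Ioi (0:ℝ))).prod volume) := by
    have h := hKI
    rwa [IntegrableOn, Measure.volume_eq_prod, ← Measure.prod_restrict,
      Measure.restrict_univ] at h
  have he : MeasurePreserving (fun p : ℝ × ℝ => (p.1, p.2 - c * p.1))
      ((volume.restrict (Ioi (0:ℝ))).prod volume)
      ((volume.restrict (Ioi (0:ℝ))).prod volume) := by
    refine MeasurePreserving.skew_product (g := fun a r => r - c * a)
      (MeasurePreserving.id _) ?_ (ae_of_all _ fun a => ?_)
    · exact measurable_snd.sub (measurable_fst.const_mul c)
    · simp only [sub_eq_add_neg]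
      exact map_add_right_eq_self volume _
  have hFe : Integrable (fun p : ℝ × ℝ => K p.1 (p.2 - c * p.1) * Real.exp (-z * p.2))
      ((volume.restrict (Ioi (0:ℝ))).prod volume) := by
    have h := (he.integrable_comp hF.aestronglyMeasurable).2 hF
    have hfe : ((fun p : ℝ × ℝ => K p.1 p.2 * Real.exp (-z * (c * p.1 + p.2))) ∘
        (fun p : ℝ × ℝ => (p.1, p.2 - c * p.1)))
        = fun p : ℝ × ℝ => K p.1 (p.2 - c * p.1) * Real.exp (-z * p.2) := by
      funext p
      simp only [Function.comp]
      rw [show -z * (c * p.1 + (p.2 - c * p.1)) = -z * p.2 from by ring]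
    rwa [hfe] at h
  have hbint : Integrable (fun r => ∫ s in Ioi (0:ℝ), K s (r - c * s) * Real.exp (-z * r))
      volume := by
    have h := (hFe.swap).integral_prod_left
    exact h
  have hbeq : (fun r => k2 K c r * Real.exp (-z * r))
      = fun r => ∫ s in Ioi (0:ℝ), K s (r - c * s) * Real.exp (-z * r) := by
    funext r
    rw [k2]
    exact (integral_mul_const _ _).symm
  constructor
  · rw [hbeq]; exact hbint
  · rw [hbeq]
    rw [← integral_integral_swap hFe]
    refine setIntegral_congr_fun measurableSet_Ioi (fun s _ => ?_)
    have h := integral_sub_right_eq_self (μ := volume)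
      (fun w => K s w * Real.exp (-z * (c * s + w))) (c * s)
    rw [← h]
    refine integral_congr_ae (ae_of_all _ fun r => ?_)
    show K s (r - c * s) * Real.exp (-z * r) = K s (r - c * s) * Real.exp (-z * (c * s + (r - c * s)))
    rw [show -z * (c * s + (r - c * s)) = -z * r from by ring]

lemma conv_laplace {f g : ℝ → ℝ} {z : ℝ}
    (hf : Integrable (fun s => f s * Real.exp (-z * s)) volume)
    (hg : Integrable (fun r => g r * Real.exp (-z * r)) volume) :
    ∫ t : ℝ, conv f g t * Real.exp (-z * t)
      = (∫ s : ℝ, f s * Real.exp (-z * s)) * (∫ r : ℝ, g r * Real.exp (-z * r)) := by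
  set A := fun s => f s * Real.exp (-z * s) with hA
  set B := fun r => g r * Real.exp (-z * r) with hB
  have hpt : ∀ t, conv f g t * Real.exp (-z * t)
      = (convolution B A (ContinuousLinearMap.mul ℝ ℝ) volume) t := by
    intro t
    rw [conv, ← integral_mul_const, convolution_def]
    refine integral_congr_ae (ae_of_all _ fun r => ?_)
    show f (t - r) * g r * Real.exp (-z * t)
      = (ContinuousLinearMap.mul ℝ ℝ) (B r) (A (t - r))
    simp only [ContinuousLinearMap.mul_apply', hA, hB]
    rw [show -z * t = -z * r + -z * (t - r) from by ring, Real.exp_add]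
    ring
  calc ∫ t : ℝ, conv f g t * Real.exp (-z * t)
      = ∫ t : ℝ, (convolution B A (ContinuousLinearMap.mul ℝ ℝ) volume) t :=
        integral_congr_ae (ae_of_all _ hpt)
    _ = (∫ r : ℝ, B r) * (∫ s : ℝ, A s) := by
        rw [integral_convolution]
        · simp [ContinuousLinearMap.mul_apply']
        · exact hg
        · exact hf
    _ = (∫ s : ℝ, A s) * (∫ r : ℝ, B r) := by ring

/-- The identity `χ(z) = -χ₀(z,c)/(β + cz - z²)`, and `χ(0) = (f'(0) - g'(0))/β`. -/
theorem chi_identity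
    (K : ℝ → ℝ → ℝ) (γsharp : ℝ → ℝ≥0∞) (β c fd0 gd0 : ℝ)
    -- (H0)
    (hKmeas : Measurable fun x : ℝ × ℝ => K x.1 x.2)
    (hKnn : ∀ s w, 0 ≤ K s w)
    (hKint : IntegrableOn (fun x : ℝ × ℝ => K x.1 x.2) (Set.Ioi 0 ×ˢ Set.univ))
    (hKnorm : (∫ s in Set.Ioi (0:ℝ), ∫ w : ℝ, K s w) = 1)
    (hγpos : ∀ c', 0 < γsharp c')
    (hKconv : ∀ c' z : ℝ, 0 ≤ z → ENNReal.ofReal z < γsharp c' →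
      IntegrableOn (fun x : ℝ × ℝ => K x.1 x.2 * Real.exp (-z * (c' * x.1 + x.2)))
        (Set.Ioi 0 ×ˢ Set.univ))
    (hKdiv : ∀ c' z : ℝ, γsharp c' < ENNReal.ofReal z →
      ¬ IntegrableOn (fun x : ℝ × ℝ => K x.1 x.2 * Real.exp (-z * (c' * x.1 + x.2)))
        (Set.Ioi 0 ×ˢ Set.univ))
    -- β > f'(0) > 0
    (hfd0 : 0 < fd0) (hβ : fd0 < β) :
    (∀ z : ℝ, 0 ≤ z → z < muRoot β c → ENNReal.ofReal z < γsharp c →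
      chiFun K β c fd0 gd0 z = -(chi0 K fd0 gd0 z c) / (β + c * z - z ^ 2)) ∧
    chiFun K β c fd0 gd0 0 = (fd0 - gd0) / β ∧
    (fd0 < gd0 → chiFun K β c fd0 gd0 0 < 0) := by
  have hβ0 : 0 < β := hfd0.trans hβ
  have key : ∀ z : ℝ, 0 ≤ z → z < muRoot β c → ENNReal.ofReal z < γsharp c →
      chiFun K β c fd0 gd0 z = -(chi0 K fd0 gd0 z c) / (β + c * z - z ^ 2) := by
    intro z hz hzμ hzγ
    obtain ⟨hk1int, hk1val⟩ := k1_laplace (c := c) hβ0 hz hzμ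
    obtain ⟨hk2int, hk2val⟩ := k2_laplace K c z (hKconv c z hz hzγ)
    have hconv := conv_laplace hk1int hk2int
    have hP : 0 < β + c * z - z ^ 2 := by
      rw [den_eq (c := c) (z := z) hβ0]
      exact mul_pos (by linarith [nu_neg (c := c) hβ0]) (by linarith)
    simp only [chiFun, chi0]
    rw [hconv, hk1val, hk2val]
    field_simp
    ring
  have h0 : chiFun K β c fd0 gd0 0 = (fd0 - gd0) / β := by
    have h := key 0 le_rfl (mu_pos hβ0) (by simpa using hγpos c)
    rw [h]
    simp only [chi0, neg_zero, zero_mul, Real.exp_zero, mul_one]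
    rw [hKnorm]
    rw [show (0:ℝ) ^ 2 - c * 0 - fd0 + gd0 * 1 = gd0 - fd0 from by ring,
        show β + c * 0 - (0:ℝ) ^ 2 = β from by ring]
    ring
  refine ⟨key, h0, fun hlt => ?_⟩
  rw [h0]
  exact div_neg_of_neg_of_pos (by linarith) hβ0
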